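/- Let x = ζ^{log₂ φ} where ζ ≥ 0 and φ = (1+√5)/2, and define δ'(ζ) = 2·(8ζ)^{log₂ φ} = 2·8^{log₂ φ}·x. If ζ ∈ [0, 1/4], then 2·(1 − δ'(ζ)) ≤ (1 − δ'(2ζ)) + (1 − δ'(ζ²)). Equivalently, δ'(2ζ) + δ'(ζ²) ≤ 2·δ'(ζ) for ζ ∈ [0,1/4]. -/
import Mathlib


/-- `δ'(ζ) = 2·(8ζ)^{log₂ φ}` with `φ` the golden ratio. -/
noncomputable def deltaP (ζ : ℝ) : ℝ :=
  2 * (8 * ζ) ^ Real.logb 2 ((1 + Real.sqrt 5) / 2)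

theorem deltaP_convexity_bound (ζ : ℝ) (h0 : 0 ≤ ζ) (h1 : ζ ≤ 1 / 4) :
    2 * (1 - deltaP ζ) ≤ (1 - deltaP (2 * ζ)) + (1 - deltaP (ζ ^ 2)) := by
  have h5 : Real.sqrt 5 ^ 2 = 5 := Real.sq_sqrt (by norm_num)
  have hs : 1 ≤ Real.sqrt 5 := by nlinarith [Real.sqrt_nonneg 5]
  set φ : ℝ := (1 + Real.sqrt 5) / 2 with hφ
  have hφ1 : 1 < φ := by rw [hφ]; nlinarith
  set L := Real.logb 2 φ with hLdef
  have hLpos : 0 < L := Real.logb_pos (by norm_num) hφ1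
  have h2L : (2:ℝ) ^ L = φ := Real.rpow_logb (by norm_num) (by norm_num) (by linarith)
  simp only [deltaP, ← hLdef, ← hφ]
  rcases eq_or_lt_of_le h0 with hz | hz
  · rw [← hz]
    norm_num [Real.zero_rpow hLpos.ne']
  · have hy : (0:ℝ) ≤ (8 * ζ) ^ L := Real.rpow_nonneg (by linarith) L
    have e1 : (8 * (2 * ζ)) ^ L = φ * (8 * ζ) ^ L := by
      rw [show (8:ℝ) * (2 * ζ) = 2 * (8 * ζ) by ring,
        Real.mul_rpow (by norm_num) (by linarith), h2L]
    have e2 : (8 * ζ ^ 2) ^ L = (8 * ζ) ^ L * ζ ^ L := by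
      rw [show (8:ℝ) * ζ ^ 2 = (8 * ζ) * ζ by ring,
        Real.mul_rpow (by positivity) h0]
    have key : (2 - φ) * φ ^ 2 = 1 := by
      rw [hφ]; linear_combination (1 - Real.sqrt 5) / 8 * h5
    have h14 : ((1:ℝ)/4) ^ L = 2 - φ := by
      have h4 : (4:ℝ) ^ L = φ ^ 2 := by
        rw [show (4:ℝ) = 2 * 2 by norm_num,
          Real.mul_rpow (by norm_num) (by norm_num), h2L]; ring
      have hq : ((1:ℝ)/4) ^ L * (4:ℝ) ^ L = 1 := by
        rw [← Real.mul_rpow (by norm_num) (by norm_num)]; norm_num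
      rw [h4] at hq
      have hφ2 : φ ^ 2 ≠ 0 := by positivity
      exact mul_right_cancel₀ hφ2 (hq.trans key.symm)
    have hx : ζ ^ L ≤ 2 - φ := by
      rw [← h14]; exact Real.rpow_le_rpow h0 h1 hLpos.le
    rw [e1, e2]
    nlinarith [mul_nonneg hy (show (0:ℝ) ≤ 2 - φ - ζ ^ L by linarith)]
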